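/- Fix p ≥ 2 and 0 ≤ i ≤ (p−1)/2. If u : M^{1+n} → ℂ satisfies Σ'_μ ∂_μ^{p−i}(u^k) ∂_μ^i(ū^l) = 0 for all 1 ≤ k ≤ p−i and 0 ≤ l ≤ i, then for any holomorphic f, v = f(u) satisfies the same system of equations. That is, all solutions of the (p,i)-submodel are functionally invariant. -/

import Mathlib

/-- The partial derivative `∂_μ` of a function on `(1+n)`-dimensional
Minkowski space `M^{1+n} = Fin (n+1) → ℝ` (coordinate `0` is time). -/
noncomputable def pd {n : ℕ} {E : Type*} [NormedAddCommGroup E] [NormedSpace ℝ E]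
    (μ : Fin (n + 1)) (f : (Fin (n + 1) → ℝ) → E) (x : Fin (n + 1) → ℝ) : E :=
  deriv (fun t : ℝ => f (x + t • (Pi.single μ 1 : Fin (n + 1) → ℝ))) 0

/-- The Minkowski signed sum `Σ'_μ A_μ = A_0 − Σ_{i=1}^n A_i`, implementing
index contraction with the metric `diag(1,−1,…,−1)`. -/
def msum {n : ℕ} {E : Type*} [AddCommGroup E] (A : Fin (n + 1) → E) : E :=
  A 0 - ∑ i ∈ Finset.univ.erase (0 : Fin (n + 1)), A i

section helpers

private lemma one_le_inf : ((⊤ : ℕ∞) : WithTop ℕ∞) ≠ 0 := by simp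

private lemma nat_le_inf (m : ℕ) : ((m : ℕ∞) : WithTop ℕ∞) ≤ ((⊤ : ℕ∞) : WithTop ℕ∞) := by
  exact_mod_cast le_top

private lemma deriv_line {n : ℕ} (h : (Fin (n + 1) → ℝ) → ℂ) (hh : Differentiable ℝ h)
    (x v : Fin (n + 1) → ℝ) (t : ℝ) :
    deriv (fun s : ℝ => h (x + s • v)) t = fderiv ℝ h (x + t • v) v := by
  have hl : HasDerivAt (fun s : ℝ => x + s • v) v t := by
    simpa using ((hasDerivAt_id t).smul_const v).const_add x
  exact (((hh (x + t • v)).hasFDerivAt).comp_hasDerivAt t hl).deriv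

private lemma pd_eq_fderiv {n : ℕ} (μ : Fin (n + 1)) (h : (Fin (n + 1) → ℝ) → ℂ)
    (hh : Differentiable ℝ h) (x : Fin (n + 1) → ℝ) :
    pd μ h x = fderiv ℝ h x (Pi.single μ 1) := by
  have := deriv_line h hh x (Pi.single μ 1) 0
  simpa [pd] using this

private lemma pd_contDiff {n : ℕ} (μ : Fin (n + 1)) (h : (Fin (n + 1) → ℝ) → ℂ)
    (hh : ContDiff ℝ (⊤ : ℕ∞) h) : ContDiff ℝ (⊤ : ℕ∞) (pd μ h) := by
  have heq : pd μ h = fun x => fderiv ℝ h x (Pi.single μ 1) :=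
    funext fun x => pd_eq_fderiv μ h (hh.differentiable one_le_inf) x
  rw [heq]
  exact (hh.fderiv_right (m := (⊤ : ℕ∞)) (by simp)).clm_apply contDiff_const

private lemma pd_iter {n : ℕ} (μ : Fin (n + 1)) (m : ℕ) (h : (Fin (n + 1) → ℝ) → ℂ)
    (hh : ContDiff ℝ (⊤ : ℕ∞) h) (x : Fin (n + 1) → ℝ) :
    (pd μ)^[m] h x
      = iteratedDeriv m (fun t : ℝ => h (x + t • (Pi.single μ 1 : Fin (n + 1) → ℝ))) 0 := by
  induction m generalizing h with
  | zero => simp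
  | succ m ih =>
    rw [Function.iterate_succ_apply, ih (pd μ h) (pd_contDiff μ h hh)]
    have hder : (fun t : ℝ => pd μ h (x + t • (Pi.single μ 1 : Fin (n + 1) → ℝ)))
        = deriv (fun t : ℝ => h (x + t • (Pi.single μ 1 : Fin (n + 1) → ℝ))) := by
      funext t
      rw [pd_eq_fderiv μ h (hh.differentiable one_le_inf),
        deriv_line h (hh.differentiable one_le_inf)]
    rw [hder, ← iteratedDeriv_succ']

end helpers

section itlemmas

variable {𝕜 : Type*} [NontriviallyNormedField 𝕜]

private lemma it_add {f g : 𝕜 → ℂ} [NormedAlgebra 𝕜 ℂ] (hf : ContDiff 𝕜 (⊤ : ℕ∞) f)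
    (hg : ContDiff 𝕜 (⊤ : ℕ∞) g) (m : ℕ) (x : 𝕜) :
    iteratedDeriv m (fun t => f t + g t) x = iteratedDeriv m f x + iteratedDeriv m g x := by
  simp only [← iteratedDerivWithin_univ]
  exact iteratedDerivWithin_add (Set.mem_univ x) uniqueDiffOn_univ
    ((hf.of_le (nat_le_inf m)).contDiffWithinAt) ((hg.of_le (nat_le_inf m)).contDiffWithinAt)

private lemma it_sub {f g : 𝕜 → ℂ} [NormedAlgebra 𝕜 ℂ] (hf : ContDiff 𝕜 (⊤ : ℕ∞) f)
    (hg : ContDiff 𝕜 (⊤ : ℕ∞) g) (m : ℕ) (x : 𝕜) :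
    iteratedDeriv m (fun t => f t - g t) x = iteratedDeriv m f x - iteratedDeriv m g x := by
  simp only [← iteratedDerivWithin_univ]
  exact iteratedDerivWithin_sub (Set.mem_univ x) uniqueDiffOn_univ
    ((hf.of_le (nat_le_inf m)).contDiffWithinAt) ((hg.of_le (nat_le_inf m)).contDiffWithinAt)

private lemma it_cmul {f : 𝕜 → ℂ} [NormedAlgebra 𝕜 ℂ] [SMulCommClass 𝕜 ℂ ℂ]
    (hf : ContDiff 𝕜 (⊤ : ℕ∞) f) (c : ℂ) (m : ℕ) (x : 𝕜) :
    iteratedDeriv m (fun t => c * f t) x = c * iteratedDeriv m f x := by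
  simp only [← iteratedDerivWithin_univ]
  have := iteratedDerivWithin_const_smul (f := f) (n := m) (Set.mem_univ x) uniqueDiffOn_univ c
    ((hf.of_le (nat_le_inf m)).contDiffWithinAt)
  simpa [smul_eq_mul] using this

private lemma it_const1' (m : ℕ) (c : ℂ) (x : ℝ) :
    iteratedDeriv (m + 1) (fun _ : ℝ => c) x = 0 := by
  induction m generalizing c x with
  | zero => rw [iteratedDeriv_succ', iteratedDeriv_zero]; simp
  | succ m ih =>
    rw [iteratedDeriv_succ']
    have : deriv (fun _ : ℝ => c) = fun _ : ℝ => (0 : ℂ) := by funext y; simp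
    rw [this]
    exact ih 0 x

private lemma it_const1 (m : ℕ) (hm : 1 ≤ m) (c : ℂ) (x : ℝ) :
    iteratedDeriv m (fun _ : ℝ => c) x = 0 := by
  obtain ⟨m, rfl⟩ := Nat.exists_eq_add_of_le hm
  rw [Nat.add_comm]
  exact it_const1' m c x

private lemma it_star {f : ℝ → ℂ} (hf : ContDiff ℝ (⊤ : ℕ∞) f) (m : ℕ) :
    iteratedDeriv m (fun t => star (f t)) = fun x => star (iteratedDeriv m f x) := by
  induction m with
  | zero => simp [iteratedDeriv_zero]
  | succ m ih =>
    funext x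
    rw [iteratedDeriv_succ, iteratedDeriv_succ, ih, deriv.star]

private lemma it_sum {ι : Type*} (s : Finset ι) (F : ι → ℝ → ℂ)
    (hF : ∀ j ∈ s, ContDiff ℝ (⊤ : ℕ∞) (F j)) (m : ℕ) (x : ℝ) :
    iteratedDeriv m (fun t => ∑ j ∈ s, F j t) x = ∑ j ∈ s, iteratedDeriv m (F j) x := by
  classical
  induction s using Finset.induction with
  | empty =>
    simp only [Finset.sum_empty]
    cases m with
    | zero => simp
    | succ m => simpa using it_const1' m 0 x
  | @insert j s hjs ih =>
    simp only [Finset.sum_insert hjs]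
    rw [it_add (hF j (Finset.mem_insert_self j s))
      (ContDiff.sum fun i hi => hF i (Finset.mem_insert_of_mem hi)) m x,
      ih fun i hi => hF i (Finset.mem_insert_of_mem hi)]

end itlemmas

section vanish

private lemma deriv_comp_entire (g : ℂ → ℂ) (hg : Differentiable ℂ g) (c : ℝ → ℂ)
    (hc : Differentiable ℝ c) :
    deriv (fun t => g (c t)) = fun t => deriv g (c t) * deriv c t := by
  funext t
  have h1 : HasDerivAt c (deriv c t) t := (hc t).hasDerivAt
  have h2 : HasDerivAt g (deriv g (c t)) (c t) := (hg (c t)).hasDerivAt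
  have := (h2.scomp t h1)
  rw [Function.comp_def] at this
  rw [this.deriv, smul_eq_mul, mul_comm]

private lemma entire_smooth {g : ℂ → ℂ} (hg : Differentiable ℂ g) : ContDiff ℝ (⊤ : ℕ∞) g :=
  (hg.contDiff (n := ((⊤ : ℕ∞) : WithTop ℕ∞))).restrict_scalars ℝ

private lemma entire_deriv {g : ℂ → ℂ} (hg : Differentiable ℂ g) :
    Differentiable ℂ (deriv g) ∧ ContDiff ℝ (⊤ : ℕ∞) (deriv g) := by
  have h1 : ContDiff ℂ ((⊤ : ℕ∞) : WithTop ℕ∞) g := hg.contDiff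
  have h2 : ContDiff ℂ ((⊤ : ℕ∞) : WithTop ℕ∞) (deriv g) := (contDiff_infty_iff_deriv.mp h1).2
  exact ⟨h2.differentiable one_le_inf, h2.restrict_scalars ℝ⟩

private lemma smooth_deriv {c : ℝ → ℂ} (hc : ContDiff ℝ (⊤ : ℕ∞) c) :
    ContDiff ℝ (⊤ : ℕ∞) (deriv c) := (contDiff_infty_iff_deriv.mp hc).2

private lemma vanish (c : ℝ → ℂ) (hc : ContDiff ℝ (⊤ : ℕ∞) c) :
    ∀ m : ℕ, ∀ g : ℂ → ℂ, Differentiable ℂ g → (∀ j ≤ m, iteratedDeriv j g (c 0) = 0) →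
      ∀ a : ℝ → ℂ, ContDiff ℝ (⊤ : ℕ∞) a → ∀ m', m' ≤ m →
        iteratedDeriv m' (fun t => g (c t) * a t) 0 = 0 := by
  intro m
  induction m with
  | zero =>
    intro g hg h0 a ha m' hm'
    obtain rfl : m' = 0 := Nat.le_zero.mp hm'
    simp [iteratedDeriv_zero]; left; exact h0 0 le_rfl
  | succ m ih =>
    intro g hg h0 a ha m' hm'
    match m' with
    | 0 => simp [iteratedDeriv_zero]; left; exact h0 0 (Nat.zero_le _)
    | (m'' + 1) =>
      have hgc : ContDiff ℝ (⊤ : ℕ∞) (fun t => g (c t)) := (entire_smooth hg).comp hc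
      have hcd : Differentiable ℝ c := hc.differentiable one_le_inf
      rw [iteratedDeriv_succ']
      have hder : deriv (fun t => g (c t) * a t)
          = fun t => deriv g (c t) * (deriv c t * a t) + g (c t) * deriv a t := by
        funext t
        rw [deriv_fun_mul (hgc.differentiable one_le_inf t) (ha.differentiable one_le_inf t)]
        have := congrFun (deriv_comp_entire g hg c hcd) t
        rw [this]; ring
      rw [hder]
      have sm1 : ContDiff ℝ (⊤ : ℕ∞) (fun t => deriv g (c t) * (deriv c t * a t)) :=
        ((entire_deriv hg).2.comp hc).mul ((smooth_deriv hc).mul ha)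
      have sm2 : ContDiff ℝ (⊤ : ℕ∞) (fun t => g (c t) * deriv a t) :=
        hgc.mul (smooth_deriv ha)
      rw [it_add sm1 sm2]
      have hm'' : m'' ≤ m := Nat.succ_le_succ_iff.mp hm'
      have e1 : iteratedDeriv m'' (fun t => deriv g (c t) * (deriv c t * a t)) 0 = 0 := by
        refine ih (deriv g) (entire_deriv hg).1 ?_ (fun t => deriv c t * a t)
          ((smooth_deriv hc).mul ha) m'' hm''
        intro j hj
        have := iteratedDeriv_succ' (n := j) (f := g)
        rw [← congrFun this (c 0)]
        exact h0 (j + 1) (Nat.succ_le_succ hj)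
      have e2 : iteratedDeriv m'' (fun t => g (c t) * deriv a t) 0 = 0 :=
        ih g hg (fun j hj => h0 j (hj.trans (Nat.le_succ m))) (deriv a)
          (smooth_deriv ha) m'' hm''
      rw [e1, e2, add_zero]

end vanish

section key

private lemma entire_smoothC {g : ℂ → ℂ} (hg : Differentiable ℂ g) :
    ContDiff ℂ (⊤ : ℕ∞) g := hg.contDiff

private lemma it_poly (p : Polynomial ℂ) (j : ℕ) (z : ℂ) :
    iteratedDeriv j (fun w => p.eval w) z = ((Polynomial.derivative)^[j] p).eval z := by
  induction j generalizing p with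
  | zero => simp
  | succ j ih =>
    rw [iteratedDeriv_succ']
    have : deriv (fun w => p.eval w) = fun w => (Polynomial.derivative p).eval w := by
      funext w; exact Polynomial.deriv p
    rw [this, ih (Polynomial.derivative p), ← Function.iterate_succ_apply]

private lemma key (m : ℕ) (hm : 1 ≤ m) (g : ℂ → ℂ) (hg : Differentiable ℂ g) (z0 : ℂ) :
    ∃ a : ℕ → ℂ, ∀ c : ℝ → ℂ, ContDiff ℝ (⊤ : ℕ∞) c → c 0 = z0 →
      iteratedDeriv m (fun t => g (c t)) 0
        = ∑ j ∈ Finset.Icc 1 m, a j * iteratedDeriv m (fun t => (c t) ^ j) 0 := by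
  classical
  set P : Polynomial ℂ := ∑ j ∈ Finset.range (m + 1),
    Polynomial.C (iteratedDeriv j g z0 / (j.factorial : ℂ)) * (Polynomial.X - Polynomial.C z0) ^ j
    with hPdef
  refine ⟨fun j => P.coeff j, ?_⟩
  intro c hc hc0
  have stepA : ∀ j ≤ m, iteratedDeriv j (fun w => P.eval w) z0 = iteratedDeriv j g z0 := by
    intro j hj
    rw [it_poly]
    have hiter : (Polynomial.derivative)^[j] P = ∑ i ∈ Finset.range (m + 1),
        Polynomial.C (iteratedDeriv i g z0 / (i.factorial : ℂ)) *
          ((i.descFactorial j) • (Polynomial.X - Polynomial.C z0) ^ (i - j)) := by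
      rw [hPdef, Polynomial.iterate_derivative_sum]
      refine Finset.sum_congr rfl fun i _ => ?_
      rw [Polynomial.iterate_derivative_C_mul, Polynomial.iterate_derivative_X_sub_pow]
    rw [hiter, Polynomial.eval_finset_sum, Finset.sum_eq_single j]
    · simp only [Polynomial.eval_mul, Polynomial.eval_C, Polynomial.eval_smul,
        Nat.descFactorial_self, Nat.sub_self, pow_zero, Polynomial.eval_one, nsmul_eq_mul, Polynomial.eval_natCast, mul_one]
      have hfac : ((j.factorial : ℂ)) ≠ 0 := by
        exact_mod_cast Nat.factorial_ne_zero j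
      exact div_mul_cancel₀ (iteratedDeriv j g z0) hfac
    · intro i hi hij
      rcases lt_or_gt_of_ne hij with hlt | hgt
      · simp [Nat.descFactorial_eq_zero_iff_lt.mpr hlt]
      · simp [Polynomial.eval_pow, zero_pow (Nat.sub_ne_zero_of_lt hgt)]
    · intro hj'
      exact absurd (Finset.mem_range.mpr (Nat.lt_succ_of_le hj)) hj'
  have hPd : Differentiable ℂ (fun w => P.eval w) := P.differentiable
  have hvan : iteratedDeriv m (fun t => g (c t) - P.eval (c t)) 0 = 0 := by
    have hjets : ∀ j ≤ m, iteratedDeriv j (fun w => g w - P.eval w) (c 0) = 0 := by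
      intro j hj
      have hsb : iteratedDeriv j (fun w => g w - P.eval w) (c 0)
          = iteratedDeriv j g (c 0) - iteratedDeriv j (fun w => P.eval w) (c 0) :=
        it_sub (entire_smoothC hg) (entire_smoothC hPd) j (c 0)
      rw [hsb, hc0, stepA j hj, sub_self]
    have := vanish c hc m (fun w => g w - P.eval w) (hg.sub hPd) hjets
      (fun _ => 1) contDiff_const m le_rfl
    simpa using this
  have h1 : ContDiff ℝ (⊤ : ℕ∞) (fun t => g (c t)) := (entire_smooth hg).comp hc
  have h2 : ContDiff ℝ (⊤ : ℕ∞) (fun t => P.eval (c t)) := (entire_smooth hPd).comp hc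
  have hsplit : iteratedDeriv m (fun t => g (c t)) 0
      = iteratedDeriv m (fun t => P.eval (c t)) 0 := by
    have hs := it_sub h1 h2 m (0 : ℝ)
    rw [hvan] at hs
    exact (sub_eq_zero.mp hs.symm)
  rw [hsplit]
  have hdeg : P.natDegree < m + 1 := Nat.lt_succ_of_le (by
    apply Polynomial.natDegree_sum_le_of_forall_le
    intro i hi
    refine le_trans (Polynomial.natDegree_C_mul_le _ _) ?_
    rw [Polynomial.natDegree_pow, Polynomial.natDegree_X_sub_C, mul_one]
    exact Nat.lt_succ_iff.mp (Finset.mem_range.mp hi))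
  have hexp : (fun t => P.eval (c t))
      = fun t => ∑ j ∈ Finset.range (m + 1), P.coeff j * (c t) ^ j := by
    funext t; exact Polynomial.eval_eq_sum_range' hdeg (c t)
  rw [hexp, it_sum (Finset.range (m + 1)) (fun j t => P.coeff j * (c t) ^ j)
    (fun j _ => contDiff_const.mul (hc.pow j)) m 0]
  have hcm : ∀ j ∈ Finset.range (m + 1),
      iteratedDeriv m (fun t => P.coeff j * (c t) ^ j) 0
        = P.coeff j * iteratedDeriv m (fun t => (c t) ^ j) 0 :=
    fun j _ => it_cmul (hc.pow j) (P.coeff j) m 0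
  rw [Finset.sum_congr rfl hcm,
    Finset.sum_eq_sum_sdiff_singleton_add (Finset.mem_range.mpr (Nat.succ_pos m))]
  have hreidx : Finset.range (m + 1) \ {0} = Finset.Icc 1 m := by
    ext a; simp [Nat.lt_succ_iff]; omega
  have hz : P.coeff 0 * iteratedDeriv m (fun t => (c t) ^ 0) 0 = 0 := by
    have hone : (fun t : ℝ => (c t) ^ 0) = fun _ : ℝ => (1 : ℂ) := by funext t; simp
    rw [hone, it_const1 m hm 1 0, mul_zero]
  rw [hreidx, hz, add_zero]

end key

section msums

private lemma contDiff_line {n : ℕ} (x v : Fin (n + 1) → ℝ) :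
    ContDiff ℝ (⊤ : ℕ∞) (fun t : ℝ => x + t • v) :=
  contDiff_const.add (contDiff_id.smul contDiff_const)

private lemma msum_sum {n : ℕ} {ι : Type*} (s : Finset ι) (F : ι → Fin (n + 1) → ℂ) :
    msum (fun μ => ∑ j ∈ s, F j μ) = ∑ j ∈ s, msum (F j) := by
  simp only [msum, Finset.sum_sub_distrib]
  congr 1
  exact Finset.sum_comm

private lemma msum_cmul {n : ℕ} (c : ℂ) (A : Fin (n + 1) → ℂ) :
    msum (fun μ => c * A μ) = c * msum A := by
  simp only [msum]
  rw [mul_sub, Finset.mul_sum]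

private lemma pd_iter_star {n : ℕ} (μ : Fin (n + 1)) (m : ℕ) (h : (Fin (n + 1) → ℝ) → ℂ)
    (hh : ContDiff ℝ (⊤ : ℕ∞) h) (x : Fin (n + 1) → ℝ) :
    (pd μ)^[m] (fun y => star (h y)) x = star ((pd μ)^[m] h x) := by
  have hsh : ContDiff ℝ (⊤ : ℕ∞) (fun y => star (h y)) := by
    have : (fun y => star (h y)) = fun y => Complex.conjCLE (h y) := by
      funext y; simp [Complex.conjCLE_apply]
    rw [this]
    exact Complex.conjCLE.contDiff.comp hh
  rw [pd_iter μ m _ hsh x, pd_iter μ m h hh x]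
  exact congrFun (it_star (hh.comp (contDiff_line x _)) m) 0

private lemma pd_iter_const1 {n : ℕ} (μ : Fin (n + 1)) (m : ℕ) (hm : 1 ≤ m)
    (x : Fin (n + 1) → ℝ) :
    (pd μ)^[m] (fun _ : Fin (n + 1) → ℝ => (1 : ℂ)) x = 0 := by
  rw [pd_iter μ m _ contDiff_const x]
  exact it_const1 m hm 1 0

end msums


/-- Functional invariance of the `(p,i)`-submodel: if `u` satisfies
`Σ'_μ ∂_μ^{p−i}(u^k) ∂_μ^i(ū^l) = 0` for all `1 ≤ k ≤ p−i` and `0 ≤ l ≤ i`,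
then for any holomorphic `f`, `v = f(u)` satisfies the same system. -/
theorem pi_submodel_functional_invariance {n : ℕ} (p i : ℕ)
    (hp : 2 ≤ p) (hi : 2 * i + 1 ≤ p)
    (u : (Fin (n + 1) → ℝ) → ℂ) (hu : ContDiff ℝ (⊤ : ℕ∞) u)
    (hsub : ∀ k ∈ Finset.Icc 1 (p - i), ∀ l ∈ Finset.Icc 0 i, ∀ x,
      msum (fun μ => (pd μ)^[p - i] (fun y => u y ^ k) x *
        (pd μ)^[i] (fun y => star (u y) ^ l) x) = 0)
    (f : ℂ → ℂ) (hf : Differentiable ℂ f) :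
    ∀ k ∈ Finset.Icc 1 (p - i), ∀ l ∈ Finset.Icc 0 i, ∀ x,
      msum (fun μ => (pd μ)^[p - i] (fun y => f (u y) ^ k) x *
        (pd μ)^[i] (fun y => star (f (u y)) ^ l) x) = 0 := by
  intro k hk l hl x
  have hfc : ∀ j : ℕ, Differentiable ℂ (fun z => f z ^ j) := fun j => hf.pow j
  have hpi1 : 1 ≤ p - i := by omega
  obtain ⟨a, ha⟩ := key (p - i) hpi1 (fun z => f z ^ k) (hfc k) (u x)
  have hline : ∀ μ : Fin (n + 1),
      ContDiff ℝ (⊤ : ℕ∞) (fun t : ℝ => u (x + t • (Pi.single μ 1 : Fin (n + 1) → ℝ))) :=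
    fun μ => hu.comp (contDiff_line x _)
  have hc0 : ∀ μ : Fin (n + 1),
      u (x + (0 : ℝ) • (Pi.single μ 1 : Fin (n + 1) → ℝ)) = u x := by
    intro μ; simp
  have hT : ∀ μ, (pd μ)^[p - i] (fun y => f (u y) ^ k) x
      = ∑ j ∈ Finset.Icc 1 (p - i), a j * (pd μ)^[p - i] (fun y => u y ^ j) x := by
    intro μ
    refine (pd_iter μ (p - i) _ ((entire_smooth (hfc k)).comp hu) x).trans ?_
    refine (ha _ (hline μ) (hc0 μ)).trans ?_
    refine Finset.sum_congr rfl fun j _ => ?_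
    exact congrArg (a j * ·) (pd_iter μ (p - i) (fun y => u y ^ j) (hu.pow j) x).symm
  rcases Nat.eq_zero_or_pos i with hi0 | hipos
  · subst hi0
    obtain rfl : l = 0 := Nat.le_zero.mp (Finset.mem_Icc.mp hl).2
    simp only [Function.iterate_zero, id_eq, pow_zero, mul_one]
    have hz : (fun μ : Fin (n + 1) => (pd μ)^[p - 0] (fun y => f (u y) ^ k) x)
        = fun μ => ∑ j ∈ Finset.Icc 1 (p - 0), a j * (pd μ)^[p - 0] (fun y => u y ^ j) x :=
      funext hT
    rw [hz, msum_sum]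
    refine Finset.sum_eq_zero fun j hj => ?_
    rw [msum_cmul]
    have h0 := hsub j hj 0 (by simp) x
    simp only [Function.iterate_zero, id_eq, pow_zero, mul_one] at h0
    rw [h0, mul_zero]
  · rcases Nat.eq_zero_or_pos l with rfl | hlpos
    · have hb0 : ∀ μ : Fin (n + 1), (pd μ)^[i] (fun y => star (f (u y)) ^ 0) x = 0 := by
        intro μ
        have he : (fun y : Fin (n + 1) → ℝ => star (f (u y)) ^ 0)
            = fun _ : Fin (n + 1) → ℝ => (1 : ℂ) := by funext y; simp
        rw [he]
        exact pd_iter_const1 μ i hipos x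
      have hz : (fun μ : Fin (n + 1) => (pd μ)^[p - i] (fun y => f (u y) ^ k) x *
          (pd μ)^[i] (fun y => star (f (u y)) ^ 0) x) = fun _ => (0 : ℂ) := by
        funext μ; rw [hb0 μ, mul_zero]
      rw [hz]
      simp [msum]
    · obtain ⟨b, hb⟩ := key i hipos (fun z => f z ^ l) (hfc l) (u x)
      have hB : ∀ μ, (pd μ)^[i] (fun y => star (f (u y)) ^ l) x
          = ∑ m' ∈ Finset.Icc 1 i, star (b m') * (pd μ)^[i] (fun y => star (u y) ^ m') x := by
        intro μ
        have hstep : (pd μ)^[i] (fun y => f (u y) ^ l) x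
            = ∑ m' ∈ Finset.Icc 1 i, b m' * (pd μ)^[i] (fun y => u y ^ m') x := by
          refine (pd_iter μ i _ ((entire_smooth (hfc l)).comp hu) x).trans ?_
          refine (hb _ (hline μ) (hc0 μ)).trans ?_
          refine Finset.sum_congr rfl fun m' _ => ?_
          exact congrArg (b m' * ·) (pd_iter μ i (fun y => u y ^ m') (hu.pow m') x).symm
        have e1 : (fun y : Fin (n + 1) → ℝ => star (f (u y)) ^ l)
            = fun y => star ((fun y' => f (u y') ^ l) y) := by
          funext y; rw [← star_pow]
        rw [e1, pd_iter_star μ i (fun y' => f (u y') ^ l) ((entire_smooth (hfc l)).comp hu) x, hstep, star_sum]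
        refine Finset.sum_congr rfl fun m' _ => ?_
        rw [star_mul']
        congr 1
        have e3 : (fun y : Fin (n + 1) → ℝ => star (u y) ^ m')
            = fun y => star ((fun y' => u y' ^ m') y) := by
          funext y; rw [star_pow]
        rw [e3, pd_iter_star μ i (fun y' => u y' ^ m') (hu.pow m') x]
      have hcomb : (fun μ : Fin (n + 1) => (pd μ)^[p - i] (fun y => f (u y) ^ k) x *
            (pd μ)^[i] (fun y => star (f (u y)) ^ l) x)
          = fun μ => ∑ j ∈ Finset.Icc 1 (p - i), ∑ m' ∈ Finset.Icc 1 i,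
              (a j * star (b m')) * ((pd μ)^[p - i] (fun y => u y ^ j) x *
                (pd μ)^[i] (fun y => star (u y) ^ m') x) := by
        funext μ
        rw [hT μ, hB μ, Finset.sum_mul_sum]
        exact Finset.sum_congr rfl fun j _ => Finset.sum_congr rfl fun m' _ => by ring
      rw [hcomb, msum_sum]
      refine Finset.sum_eq_zero fun j hj => ?_
      rw [msum_sum]
      refine Finset.sum_eq_zero fun m' hm' => ?_
      rw [msum_cmul]
      have h0 := hsub j hj m'
        (Finset.mem_Icc.mpr ⟨Nat.zero_le _, (Finset.mem_Icc.mp hm').2⟩) x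
      rw [h0, mul_zero]
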